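/- Let G be a group and let a = Σ_{g∈G} α_g g and b = Σ_{g∈G} β_g g be elements of ℂG with non-negative real coefficients such that 0 ≤ α_g ≤ β_g for every g ∈ G. Then ‖λ_G(a)‖ ≤ ‖λ_G(b)‖. -/

import Mathlib

noncomputable section

open scoped ENNReal ComplexOrder Cardinal
open Filter Topology

/-- `ℓ²(G)`, the Hilbert space of square-summable complex functions on `G`. -/
abbrev ell2 (G : Type*) : Type _ := lp (fun _ : G => ℂ) 2

section LeftRegular

variable {G : Type*} [Group G]

theorem memℓp_shift (g : G) (f : ell2 G) :
    Memℓp (fun h : G => f (g⁻¹ * h)) 2 := by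
  apply memℓp_gen
  have hf : Summable fun h : G => ‖f h‖ ^ (2 : ℝ≥0∞).toReal :=
    (memℓp_gen_iff (by norm_num)).1 (lp.memℓp f)
  simpa [Function.comp_def] using ((Equiv.mulLeft g⁻¹).summable_iff).2 hf

/-- Left translation by `g` on `ℓ²(G)` as a linear map: `(lamAux g f) h = f (g⁻¹ h)`. -/
def lamAux (g : G) : ell2 G →ₗ[ℂ] ell2 G where
  toFun f := ⟨fun h => f (g⁻¹ * h), memℓp_shift g f⟩
  map_add' _ _ := rfl
  map_smul' _ _ := rfl

theorem norm_lamAux (g : G) (f : ell2 G) : ‖lamAux g f‖ = ‖f‖ := by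
  have h2 : (0 : ℝ) < (2 : ℝ≥0∞).toReal := by norm_num
  rw [lp.norm_eq_tsum_rpow h2, lp.norm_eq_tsum_rpow h2]
  congr 1
  exact (Equiv.mulLeft g⁻¹).tsum_eq fun h => ‖f h‖ ^ (2 : ℝ≥0∞).toReal

/-- The left regular representation of `G` on `ℓ²(G)`: `(lam g f) h = f (g⁻¹ h)`. -/
def lam (g : G) : ell2 G →L[ℂ] ell2 G :=
  LinearMap.mkContinuous (lamAux g) 1 fun f => by rw [norm_lamAux, one_mul]

end LeftRegular

/-- The linear extension of the left regular representation to the group algebra `ℂ[G]`: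
`lamAlg (Σ α_g g) = Σ α_g • lam g`. -/
def lamAlg {G : Type*} [Group G] (a : MonoidAlgebra ℂ G) : ell2 G →L[ℂ] ell2 G :=
  a.coeff.sum fun g c => c • lam g


section AuxMono

variable {G : Type*} [Group G]

theorem lamAlg_apply' (a : MonoidAlgebra ℂ G) (f : ell2 G) (h : G) :
    (lamAlg a f : G → ℂ) h = ∑ g ∈ a.coeff.support, a.coeff g * f (g⁻¹ * h) := by
  have h1 : lamAlg a = ∑ g ∈ a.coeff.support, a.coeff g • lam g := rfl
  rw [h1, ContinuousLinearMap.sum_apply, lp.coeFn_sum, Finset.sum_apply]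
  exact Finset.sum_congr rfl fun g _ => by
    rw [ContinuousLinearMap.smul_apply, lp.coeFn_smul, Pi.smul_apply, smul_eq_mul]; rfl

theorem memℓp_abs' (f : ell2 G) :
    Memℓp (fun h : G => ((‖f h‖ : ℝ) : ℂ)) 2 := by
  apply memℓp_gen
  have hf : Summable fun h : G => ‖f h‖ ^ (2 : ℝ≥0∞).toReal :=
    (memℓp_gen_iff (by norm_num)).1 (lp.memℓp f)
  simpa using hf

/-- The entrywise absolute value of an element of `ℓ²(G)`. -/
def absv (f : ell2 G) : ell2 G := ⟨fun h => ((‖f h‖ : ℝ) : ℂ), memℓp_abs' f⟩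

theorem norm_absv (f : ell2 G) : ‖absv f‖ = ‖f‖ := by
  have h2 : (0 : ℝ) < (2 : ℝ≥0∞).toReal := by norm_num
  rw [lp.norm_eq_tsum_rpow h2, lp.norm_eq_tsum_rpow h2]
  congr 1
  refine tsum_congr fun h => ?_
  have : (absv f : G → ℂ) h = ((‖f h‖ : ℝ) : ℂ) := rfl
  rw [this]
  simp

theorem lp_norm_mono (u v : ell2 G) (hle : ∀ h : G, ‖u h‖ ≤ ‖v h‖) : ‖u‖ ≤ ‖v‖ := by
  have h2 : (0 : ℝ) < (2 : ℝ≥0∞).toReal := by norm_num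
  rw [lp.norm_eq_tsum_rpow h2, lp.norm_eq_tsum_rpow h2]
  apply Real.rpow_le_rpow (tsum_nonneg fun h => Real.rpow_nonneg (norm_nonneg _) _)
  · exact Summable.tsum_le_tsum (fun h => Real.rpow_le_rpow (norm_nonneg _) (hle h) h2.le)
      ((memℓp_gen_iff h2).1 (lp.memℓp u)) ((memℓp_gen_iff h2).1 (lp.memℓp v))
  · positivity

theorem lamAlg_absv_apply (a : MonoidAlgebra ℂ G) (ha : ∀ g : G, 0 ≤ a.coeff g)
    (f : ell2 G) (h : G) :
    (lamAlg a (absv f) : G → ℂ) h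
      = ((∑ g ∈ a.coeff.support, ‖a.coeff g‖ * ‖f (g⁻¹ * h)‖ : ℝ) : ℂ) := by
  rw [lamAlg_apply']
  push_cast
  refine Finset.sum_congr rfl fun g _ => ?_
  have h1 : (absv f : G → ℂ) (g⁻¹ * h) = ((‖f (g⁻¹ * h)‖ : ℝ) : ℂ) := rfl
  rw [h1, Complex.eq_coe_norm_of_nonneg (ha g)]
  simp

end AuxMono

/-- **Lemma 2.1 (c)**. If `a = Σ α_g g` and `b = Σ β_g g` in `ℂG` have non-negative real
coefficients with `α_g ≤ β_g` for all `g`, then `‖λ_G(a)‖ ≤ ‖λ_G(b)‖`. -/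
theorem norm_lamAlg_mono {G : Type*} [Group G] (a b : MonoidAlgebra ℂ G)
    (ha : ∀ g : G, 0 ≤ a.coeff g) (hab : ∀ g : G, a.coeff g ≤ b.coeff g) :
    ‖lamAlg a‖ ≤ ‖lamAlg b‖ := by
  classical
  have hb : ∀ g : G, 0 ≤ b.coeff g := fun g => le_trans (ha g) (hab g)
  have hext : ∀ (c : MonoidAlgebra ℂ G) (s : Finset G), c.coeff.support ⊆ s → ∀ r : G → ℝ,
      ∑ g ∈ c.coeff.support, ‖c.coeff g‖ * r g = ∑ g ∈ s, ‖c.coeff g‖ * r g := fun c s hs r =>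
    Finset.sum_subset hs fun g _ hg => by
      rw [Finsupp.notMem_support_iff.1 hg]; simp
  have hnorm : ∀ g : G, ‖a.coeff g‖ ≤ ‖b.coeff g‖ := by
    intro g
    have h1 : ((‖a.coeff g‖ : ℝ) : ℂ) ≤ ((‖b.coeff g‖ : ℝ) : ℂ) := by
      rw [← Complex.eq_coe_norm_of_nonneg (ha g), ← Complex.eq_coe_norm_of_nonneg (hb g)]
      exact hab g
    exact_mod_cast h1
  apply ContinuousLinearMap.opNorm_le_bound _ (norm_nonneg _)
  intro f
  have step1 : ∀ h : G, ‖(lamAlg a f : G → ℂ) h‖ ≤ ‖(lamAlg a (absv f) : G → ℂ) h‖ := by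
    intro h
    rw [lamAlg_apply', lamAlg_absv_apply a ha f h, Complex.norm_real]
    calc ‖∑ g ∈ a.coeff.support, a.coeff g * f (g⁻¹ * h)‖
        ≤ ∑ g ∈ a.coeff.support, ‖a.coeff g * f (g⁻¹ * h)‖ := norm_sum_le _ _
      _ = ∑ g ∈ a.coeff.support, ‖a.coeff g‖ * ‖f (g⁻¹ * h)‖ := by simp [norm_mul]
      _ ≤ ‖∑ g ∈ a.coeff.support, ‖a.coeff g‖ * ‖f (g⁻¹ * h)‖‖ := le_abs_self _
  have step2 : ∀ h : G, ‖(lamAlg a (absv f) : G → ℂ) h‖ ≤ ‖(lamAlg b (absv f) : G → ℂ) h‖ := by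
    intro h
    rw [lamAlg_absv_apply a ha f h, lamAlg_absv_apply b hb f h, Complex.norm_real,
      Complex.norm_real,
      Real.norm_of_nonneg (Finset.sum_nonneg fun g _ => mul_nonneg (norm_nonneg _) (norm_nonneg _)),
      Real.norm_of_nonneg (Finset.sum_nonneg fun g _ => mul_nonneg (norm_nonneg _) (norm_nonneg _)),
      hext a (a.coeff.support ∪ b.coeff.support) Finset.subset_union_left _,
      hext b (a.coeff.support ∪ b.coeff.support) Finset.subset_union_right _]
    exact Finset.sum_le_sum fun g _ =>
      mul_le_mul_of_nonneg_right (hnorm g) (norm_nonneg _)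
  calc ‖lamAlg a f‖
      ≤ ‖lamAlg a (absv f)‖ := lp_norm_mono _ _ step1
    _ ≤ ‖lamAlg b (absv f)‖ := lp_norm_mono _ _ step2
    _ ≤ ‖lamAlg b‖ * ‖absv f‖ := (lamAlg b).le_opNorm _
    _ = ‖lamAlg b‖ * ‖f‖ := by rw [norm_absv]
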